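/- Let k ≥ 2 and 0 < a < π/2. The equation z^k e^{az} = conj(−e^{az}/z^k) for z ∈ ℂ \ {0} forces |z| = 1, and writing z = e^{iθ} it reduces to e^{2ai sin θ} = −1, which has no real solution θ when 0 < a < π/2. -/

import Mathlib

open Complex

/-- For `k ≥ 2` and `0 < a < π/2`:
(i) any solution `z ≠ 0` of `z^k e^{az} = conj(-e^{az}/z^k)` satisfies `|z| = 1`;
(ii) for `z = e^{iθ}` the equation is equivalent to `e^{2ai sin θ} = -1`;
(iii) the latter has no real solution `θ`. -/
theorem stmt3 (k : ℕ) (hk : 2 ≤ k) (a : ℝ) (ha : 0 < a) (ha' : a < Real.pi / 2) :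
    (∀ z : ℂ, z ≠ 0 →
        z ^ k * Complex.exp ((a : ℂ) * z) =
          (starRingEnd ℂ) (-(Complex.exp ((a : ℂ) * z)) / z ^ k) →
        ‖z‖ = 1) ∧
    (∀ θ : ℝ,
        (Complex.exp (I * θ)) ^ k * Complex.exp ((a : ℂ) * Complex.exp (I * θ)) =
            (starRingEnd ℂ)
              (-(Complex.exp ((a : ℂ) * Complex.exp (I * θ))) /
                (Complex.exp (I * θ)) ^ k) ↔
          Complex.exp (2 * (a : ℂ) * I * Real.sin θ) = -1) ∧
    (∀ θ : ℝ, Complex.exp (2 * (a : ℂ) * I * Real.sin θ) ≠ -1) := by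
  refine ⟨?_, ?_, ?_⟩
  · intro z hz heq
    have h1 := congrArg (‖·‖) heq
    have hzpos : 0 < ‖z‖ := norm_pos_iff.mpr hz
    have hE : 0 < Real.exp (a * z.re) := Real.exp_pos _
    simp only [norm_mul, Complex.norm_conj, norm_div, norm_neg, norm_pow,
      Complex.norm_exp] at h1
    -- h1 : |z|^k * exp(..) = exp(..) / |z|^k
    have h2 : ‖z‖ ^ k * ‖z‖ ^ k = 1 := by
      have hkz : ‖z‖ ^ k ≠ 0 := by positivity
      field_simp at h1
      have h1' : (‖z‖ ^ k * ‖z‖ ^ k) * Real.exp (a * z.re)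
          = 1 * Real.exp (a * z.re) := by rw [one_mul]; linear_combination (Real.exp (a * z.re)) * h1
      exact mul_right_cancel₀ hE.ne' h1'
    have h3 : ‖z‖ ^ (2*k) = 1 := by rw [two_mul, pow_add]; exact h2
    have hk0 : 2 * k ≠ 0 := by omega
    rcases lt_trichotomy ‖z‖ 1 with h | h | h
    · have := pow_lt_one₀ hzpos.le h hk0
      linarith
    · exact h
    · have := one_lt_pow₀ h hk0
      linarith
  · intro θ
    set z := Complex.exp (I * θ) with hzdef
    have hz : z ≠ 0 := Complex.exp_ne_zero _
    have hzinv : z⁻¹ = Complex.exp (-(I * θ)) := by rw [hzdef, ← Complex.exp_neg]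
    have hconj : (starRingEnd ℂ) z = z⁻¹ := by
      rw [hzinv, hzdef, ← Complex.exp_conj]
      congr 1
      simp [Complex.conj_ofReal]
    have hdiff : (a:ℂ) * z - (a:ℂ) * z⁻¹ = 2 * (a:ℂ) * I * Real.sin θ := by
      rw [hzinv, hzdef, mul_comm I (θ:ℂ), ← neg_mul, Complex.exp_mul_I,
        Complex.exp_mul_I, Complex.ofReal_sin]
      simp only [Complex.sin_neg, Complex.cos_neg]
      ring
    have hRHS : (starRingEnd ℂ) (-(Complex.exp ((a:ℂ)*z)) / z ^ k)
        = -(Complex.exp ((a:ℂ) * z⁻¹)) * z ^ k := by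
      rw [map_div₀, map_neg, ← Complex.exp_conj, map_pow, hconj, map_mul,
        Complex.conj_ofReal, hconj, inv_pow, div_eq_mul_inv, inv_inv]
    have hexp : Complex.exp ((a:ℂ)*z)
        = Complex.exp ((a:ℂ)*z⁻¹) * Complex.exp (2 * (a:ℂ) * I * Real.sin θ) := by
      rw [← Complex.exp_add, ← hdiff]
      ring_nf
    rw [hRHS,
      show z ^ k * Complex.exp ((a:ℂ)*z)
          = (Complex.exp ((a:ℂ)*z⁻¹) * z ^ k) * Complex.exp (2 * (a:ℂ) * I * Real.sin θ) by
        rw [hexp]; ring,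
      show -(Complex.exp ((a:ℂ)*z⁻¹)) * z ^ k
          = (Complex.exp ((a:ℂ)*z⁻¹) * z ^ k) * (-1) by ring]
    exact mul_right_inj' (mul_ne_zero (Complex.exp_ne_zero _) (pow_ne_zero _ hz))
  · intro θ h
    rw [show (2 * (a:ℂ) * I * Real.sin θ) = ((2 * a * Real.sin θ : ℝ) : ℂ) * I by
        push_cast; ring,
      Complex.exp_mul_I, ← Complex.ofReal_cos, ← Complex.ofReal_sin] at h
    set t : ℝ := 2 * a * Real.sin θ with ht
    have hcos : Real.cos t = -1 := by
      have := congrArg Complex.re h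
      simpa [Complex.cos_ofReal_re] using this
    have habs : |t| < Real.pi := by
      have h1 : |Real.sin θ| ≤ 1 := abs_le.mpr ⟨Real.neg_one_le_sin θ, Real.sin_le_one θ⟩
      rw [ht, abs_mul, abs_mul]
      rw [abs_of_pos (by norm_num : (0:ℝ) < 2), abs_of_pos ha]
      nlinarith [Real.pi_pos]
    have hc1 : Real.cos (t + Real.pi) = 1 := by
      rw [Real.cos_add_pi, hcos]; norm_num
    have hlt1 : -(2 * Real.pi) < t + Real.pi := by
      have := abs_lt.mp habs; linarith [Real.pi_pos]
    have hlt2 : t + Real.pi < 2 * Real.pi := by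
      have := abs_lt.mp habs; linarith
    have := (Real.cos_eq_one_iff_of_lt_of_lt hlt1 hlt2).mp hc1
    have := abs_lt.mp habs
    linarith
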